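/- Let ℓ⃗ = (ℓ_μ ≥ ⋯ ≥ ℓ_1) and ℓ⃗' = (ℓ'_{μ'} ≥ ⋯ ≥ ℓ'_1) be partitions of the same integer ℓ ≥ 1 into positive parts. If ∏_{ν=1}^{μ} (t^{2ℓ_ν} - 1) = ∏_{ν=1}^{μ'} (t^{2ℓ'_ν} - 1) as polynomials in ℂ[t], then μ = μ' and ℓ_ν = ℓ'_ν for all ν. -/

import Mathlib

open Polynomial

private lemma factor_ne_zero (n : ℕ) (hn : 0 < n) : ((X : ℂ[X]) ^ (2 * n) - 1) ≠ 0 := by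
  intro h
  have := congrArg (Polynomial.eval 0) h
  simp [zero_pow, Nat.mul_ne_zero two_ne_zero hn.ne'] at this

private lemma root_iff (s : Multiset ℕ) (z : ℂ) :
    Polynomial.eval z ((s.map (fun n => (X : ℂ[X]) ^ (2 * n) - 1)).prod) = 0 ↔
      ∃ n ∈ s, z ^ (2 * n) = 1 := by
  rw [Polynomial.eval_multiset_prod, Multiset.prod_eq_zero_iff]
  simp [sub_eq_zero]

private lemma exists_dvd_mem {s s' : Multiset ℕ} {m : ℕ} (hm : m ∈ s) (hmpos : 0 < m)
    (heq : (s.map (fun n => (X : ℂ[X]) ^ (2 * n) - 1)).prod =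
      (s'.map (fun n => (X : ℂ[X]) ^ (2 * n) - 1)).prod) :
    ∃ n ∈ s', m ∣ n := by
  have h2m : (2 * m) ≠ 0 := Nat.mul_ne_zero two_ne_zero hmpos.ne'
  have hprim := Complex.isPrimitiveRoot_exp (2 * m) h2m
  have hroot : Polynomial.eval (Complex.exp (2 * Real.pi * Complex.I / (2 * m : ℕ))) ((s.map (fun n => (X : ℂ[X]) ^ (2 * n) - 1)).prod) = 0 :=
    (root_iff s (Complex.exp (2 * Real.pi * Complex.I / (2 * m : ℕ)))).mpr ⟨m, hm, hprim.pow_eq_one⟩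
  rw [heq, root_iff] at hroot
  obtain ⟨n, hn, hpow⟩ := hroot
  exact ⟨n, hn, (Nat.mul_dvd_mul_iff_left (by norm_num : 0 < 2)).mp
    ((hprim.pow_eq_one_iff_dvd _).mp hpow)⟩

private lemma key : ∀ (N : ℕ) (s s' : Multiset ℕ), s.card ≤ N → (∀ n ∈ s, 0 < n) →
    (∀ n ∈ s', 0 < n) →
    (s.map (fun n => (X : ℂ[X]) ^ (2 * n) - 1)).prod =
    (s'.map (fun n => (X : ℂ[X]) ^ (2 * n) - 1)).prod → s = s' := by
  intro N
  induction N with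
  | zero =>
    intro s s' hcard hp hp' heq
    have hs : s = 0 := Multiset.card_eq_zero.mp (Nat.le_zero.mp hcard)
    subst hs
    by_contra h
    obtain ⟨n, hn⟩ := Multiset.exists_mem_of_ne_zero (Ne.symm h)
    obtain ⟨k, hk, -⟩ := exists_dvd_mem hn (hp' n hn) heq.symm
    exact absurd hk (Multiset.notMem_zero k)
  | succ N ih =>
    intro s s' hcard hp hp' heq
    rcases eq_or_ne s 0 with rfl | hne
    · by_contra h
      obtain ⟨n, hn⟩ := Multiset.exists_mem_of_ne_zero (Ne.symm h)
      obtain ⟨k, hk, -⟩ := exists_dvd_mem hn (hp' n hn) heq.symm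
      exact absurd hk (Multiset.notMem_zero k)
    · have htne : s.toFinset.Nonempty := by
        obtain ⟨a, ha⟩ := Multiset.exists_mem_of_ne_zero hne
        exact ⟨a, Multiset.mem_toFinset.mpr ha⟩
      set m := s.toFinset.max' htne with hmdef
      have hm : m ∈ s := Multiset.mem_toFinset.mp (s.toFinset.max'_mem htne)
      have hmax : ∀ k ∈ s, k ≤ m := fun k hk =>
        s.toFinset.le_max' k (Multiset.mem_toFinset.mpr hk)
      obtain ⟨n, hn, hdvd⟩ := exists_dvd_mem hm (hp m hm) heq
      obtain ⟨k, hk, hdvd'⟩ := exists_dvd_mem hn (hp' n hn) heq.symm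
      have hnm : n = m := le_antisymm (le_trans (Nat.le_of_dvd (hp k hk) hdvd') (hmax k hk))
        (Nat.le_of_dvd (hp' n hn) hdvd)
      rw [hnm] at hn
      -- cancel the factor X^(2m) - 1
      have hs : s = m ::ₘ s.erase m := (Multiset.cons_erase hm).symm
      have hs' : s' = m ::ₘ s'.erase m := (Multiset.cons_erase hn).symm
      rw [hs, hs', Multiset.map_cons, Multiset.map_cons, Multiset.prod_cons,
        Multiset.prod_cons] at heq
      have heq' := mul_left_cancel₀ (factor_ne_zero m (hp m hm)) heq
      have hcard' : (s.erase m).card ≤ N := by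
        have h1 : (s.erase m).card = s.card - 1 := by
          rw [Multiset.card_erase_of_mem hm]; rfl
        have h2 : 0 < Multiset.card s := Multiset.card_pos.mpr hne
        omega
      have := ih (s.erase m) (s'.erase m) hcard'
        (fun x hx => hp x (Multiset.mem_of_mem_erase hx))
        (fun x hx => hp' x (Multiset.mem_of_mem_erase hx)) heq'
      rw [hs, hs', this]


/-- If `ℓ⃗ = (ℓ_μ ≥ ⋯ ≥ ℓ_1)` and `ℓ⃗' = (ℓ'_{μ'} ≥ ⋯ ≥ ℓ'_1)` are
partitions of the same integer `ℓ ≥ 1` into positive parts and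
`∏_ν (t^{2ℓ_ν} - 1) = ∏_ν (t^{2ℓ'_ν} - 1)` in `ℂ[t]`, then `μ = μ'` and `ℓ_ν = ℓ'_ν` for
all `ν`. -/
theorem stmt10 (ℓ μ μ' : ℕ) (hℓ : 1 ≤ ℓ) (L : Fin μ → ℕ) (L' : Fin μ' → ℕ)
    (hpos : ∀ ν, 0 < L ν) (hmono : Monotone L) (hsum : ∑ ν, L ν = ℓ)
    (hpos' : ∀ ν, 0 < L' ν) (hmono' : Monotone L') (hsum' : ∑ ν, L' ν = ℓ)
    (heq : ∏ ν : Fin μ, ((X : ℂ[X]) ^ (2 * L ν) - 1) =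
           ∏ ν : Fin μ', ((X : ℂ[X]) ^ (2 * L' ν) - 1)) :
    μ = μ' ∧ ∀ (ν : ℕ) (h1 : ν < μ) (h2 : ν < μ'), L ⟨ν, h1⟩ = L' ⟨ν, h2⟩ := by
  have conv1 : ∀ (k : ℕ) (F : Fin k → ℕ),
      ((↑(List.ofFn F) : Multiset ℕ).map (fun n => (X : ℂ[X]) ^ (2 * n) - 1)).prod
        = ∏ ν, ((X : ℂ[X]) ^ (2 * F ν) - 1) := by
    intro k F
    simp [List.map_ofFn, List.prod_ofFn, Function.comp]
  have hmeq : (↑(List.ofFn L) : Multiset ℕ) = (↑(List.ofFn L') : Multiset ℕ) := by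
    apply key (List.ofFn L).length _ _ (by simp)
    · intro n hn
      obtain ⟨i, rfl⟩ := List.mem_ofFn.mp hn
      exact hpos i
    · intro n hn
      obtain ⟨i, rfl⟩ := List.mem_ofFn.mp hn
      exact hpos' i
    · rw [conv1, conv1]; exact heq
  have hperm : (List.ofFn L).Perm (List.ofFn L') := Multiset.coe_eq_coe.mp hmeq
  have hleq : List.ofFn L = List.ofFn L' :=
    hperm.eq_of_sortedLE hmono.sortedLE_ofFn hmono'.sortedLE_ofFn
  have hμ : μ = μ' := by
    have := congrArg List.length hleq
    simpa using this
  subst hμ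
  have hL : L = L' := List.ofFn_injective hleq
  subst hL
  exact ⟨rfl, fun ν h1 h2 => rfl⟩
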